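/- The permanent-memory Accept-First queue algorithm (PFQ) with initial agent order 1,...,n produces the same matching as the simultaneous Naive Boston mechanism in which every item has the common priority order 1 > ... > n. -/

import Mathlib

/-- One round of the simultaneous (Naive) Boston mechanism with unit capacities and
common priority order `0 > 1 > ⋯ > n-1`; `pref a k` is agent `a`'s `k`-th ranked
item (0-based). -/
def bostonStep {n : ℕ} (pref : Fin n → ℕ → Fin n) (k : ℕ)
    (st : Fin n → Option (Fin n)) : Fin n → Option (Fin n) :=
  fun a =>
    match st a with
    | some o => some o
    | none =>
        if (∀ b : Fin n, st b ≠ some (pref a k)) ∧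
            (∀ b : Fin n, b < a → st b = none → pref b k ≠ pref a k)
        then some (pref a k) else none

/-- The partial matching of the Boston mechanism after `k` rounds. -/
def bostonState {n : ℕ} (pref : Fin n → ℕ → Fin n) : ℕ → Fin n → Option (Fin n)
  | 0 => fun _ => none
  | k + 1 => bostonStep pref k (bostonState pref k)

/-- State of the permanent-memory Accept-First queue algorithm (PFQ): the queue of
agents still to propose, for each agent the set of items that have rejected it, and
the (permanent) partial assignment of items to agents. -/
structure PFQState (n : ℕ) where
  queue : List (Fin n)
  rejected : Fin n → Finset (Fin n)
  assign : Fin n → Option (Fin n)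

/-- One step of PFQ: the agent `a` at the front of the queue proposes to its most
preferred item among those that have not rejected it.  If that item is unmatched it
permanently accepts `a`; otherwise `a` is rejected and goes to the back of the
queue. -/
def pfqStep {n : ℕ} (pref : Fin n → ℕ → Fin n) (s : PFQState n) : PFQState n :=
  match s.queue with
  | [] => s
  | a :: rest =>
      match ((List.range n).find? fun k => decide (pref a k ∉ s.rejected a)) with
      | none => { s with queue := rest }
      | some k =>
          let o := pref a k
          if ∀ b : Fin n, s.assign b ≠ some o then
            { s with queue := rest, assign := Function.update s.assign a (some o) }
          else
            { s with queue := rest ++ [a],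
                     rejected := Function.update s.rejected a
                        (insert o (s.rejected a)) }

/-- The final state of PFQ started from the queue `0, 1, …, n-1` with no rejections
and no assignments (enough steps are taken for the algorithm to terminate). -/
def pfqRun {n : ℕ} (pref : Fin n → ℕ → Fin n) : PFQState n :=
  (pfqStep pref)^[n * n + n]
    { queue := List.finRange n, rejected := fun _ => ∅, assign := fun _ => none }

section Aux
variable {n : ℕ} (pref : Fin n → ℕ → Fin n)

lemma bostonStep_some {k : ℕ} {st : Fin n → Option (Fin n)} {a : Fin n} {o : Fin n}
    (h : st a = some o) : bostonStep pref k st a = some o := by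
  simp [bostonStep, h]

lemma boston_mono {k l : ℕ} (h : k ≤ l) {a o : Fin n}
    (ha : bostonState pref k a = some o) : bostonState pref l a = some o := by
  induction l with
  | zero => exact (Nat.le_zero.mp h) ▸ ha
  | succ m ih =>
      rcases Nat.lt_or_ge k (m+1) with hlt | hge
      · have := ih (by omega)
        exact bostonStep_some pref this
      · have : k = m + 1 := le_antisymm h hge
        exact this ▸ ha

lemma boston_none_of_none {k l : ℕ} (h : k ≤ l) {a : Fin n}
    (ha : bostonState pref l a = none) : bostonState pref k a = none := by
  cases hk : bostonState pref k a with
  | none => rfl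
  | some o => rw [boston_mono pref h hk] at ha; exact absurd ha (by simp)

lemma boston_succ_none {k : ℕ} {a : Fin n}
    (h0 : bostonState pref k a = none) :
    bostonState pref (k+1) a =
      if (∀ b : Fin n, bostonState pref k b ≠ some (pref a k)) ∧
          (∀ b : Fin n, b < a → bostonState pref k b = none → pref b k ≠ pref a k)
      then some (pref a k) else none := by
  show bostonStep pref k (bostonState pref k) a = _
  rw [bostonStep, h0]

lemma boston_succ_cases {k : ℕ} {a o : Fin n}
    (h : bostonState pref (k+1) a = some o) :
    bostonState pref k a = some o ∨
      (bostonState pref k a = none ∧ pref a k = o ∧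
        (∀ b : Fin n, bostonState pref k b ≠ some (pref a k)) ∧
        (∀ b : Fin n, b < a → bostonState pref k b = none → pref b k ≠ pref a k)) := by
  cases h0 : bostonState pref k a with
  | some o' =>
      left
      have : bostonState pref (k+1) a = some o' := bostonStep_some pref h0
      rw [this] at h; rw [← h]
  | none =>
      right
      rw [boston_succ_none pref h0] at h
      by_cases hc : (∀ b : Fin n, bostonState pref k b ≠ some (pref a k)) ∧
          (∀ b : Fin n, b < a → bostonState pref k b = none → pref b k ≠ pref a k)
      · rw [if_pos hc] at h
        exact ⟨rfl, Option.some_injective _ h, hc.1, hc.2⟩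
      · rw [if_neg hc] at h; exact absurd h (by simp)

lemma boston_inj {k : ℕ} {a b o : Fin n}
    (ha : bostonState pref k a = some o) (hb : bostonState pref k b = some o) :
    a = b := by
  induction k with
  | zero => simp [bostonState] at ha
  | succ m ih =>
      rcases boston_succ_cases pref ha with ha' | ⟨han, hao, hc1, hc2⟩
      · rcases boston_succ_cases pref hb with hb' | ⟨hbn, hbo, hd1, hd2⟩
        · exact ih ha' hb'
        · exact absurd ha' (hbo ▸ hd1 a)
      · rcases boston_succ_cases pref hb with hb' | ⟨hbn, hbo, hd1, hd2⟩
        · exact absurd hb' (hao ▸ hc1 b)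
        · by_contra hne
          rcases lt_or_gt_of_ne hne with hlt | hlt
          · exact hd2 a hlt han (by rw [hao, hbo])
          · exact hc2 b hlt hbn (by rw [hao, hbo])

lemma boston_least_succeeds {k : ℕ} {o : Fin n}
    (hfree : ∀ c : Fin n, bostonState pref k c ≠ some o)
    (hex : ∃ b : Fin n, bostonState pref k b = none ∧ pref b k = o) :
    ∃ b : Fin n, bostonState pref k b = none ∧ pref b k = o ∧
      bostonState pref (k+1) b = some o ∧
      (∀ b' : Fin n, bostonState pref k b' = none → pref b' k = o → b ≤ b') := by
  classical
  set S : Finset (Fin n) :=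
    Finset.univ.filter (fun b => bostonState pref k b = none ∧ pref b k = o) with hS
  have hSne : S.Nonempty := by
    obtain ⟨b, h1, h2⟩ := hex
    exact ⟨b, by simp [hS, h1, h2]⟩
  set b := S.min' hSne with hb
  have hbmem : b ∈ S := S.min'_mem hSne
  have hbn : bostonState pref k b = none := by
    have := Finset.mem_filter.mp hbmem; exact this.2.1
  have hbo : pref b k = o := by
    have := Finset.mem_filter.mp hbmem; exact this.2.2
  have hle : ∀ b' : Fin n, bostonState pref k b' = none → pref b' k = o → b ≤ b' := by
    intro b' h1 h2
    exact S.min'_le b' (by simp [hS, h1, h2])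
  refine ⟨b, hbn, hbo, ?_, hle⟩
  rw [boston_succ_none pref hbn, hbo, if_pos]
  constructor
  · exact hfree
  · intro c hcb hcn hco
    exact absurd (hle c hcn (hbo ▸ hco)) (not_le.mpr hcb)

lemma boston_occupied {k j : ℕ} {a : Fin n}
    (ha : bostonState pref k a = none) (hj : j < k) :
    ∃ b : Fin n, bostonState pref k b = some (pref a j) := by
  classical
  have haj1 : bostonState pref (j+1) a = none := boston_none_of_none pref (by omega) ha
  have haj : bostonState pref j a = none := boston_none_of_none pref (by omega) haj1
  by_cases hfree : ∀ c : Fin n, bostonState pref j c ≠ some (pref a j)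
  · rw [boston_succ_none pref haj] at haj1
    have hnc : ¬ ((∀ b : Fin n, bostonState pref j b ≠ some (pref a j)) ∧
        (∀ b : Fin n, b < a → bostonState pref j b = none → pref b j ≠ pref a j)) := by
      intro hc; rw [if_pos hc] at haj1; simp at haj1
    have h2 : ¬ (∀ b : Fin n, b < a → bostonState pref j b = none → pref b j ≠ pref a j) := by
      intro h; exact hnc ⟨hfree, h⟩
    push_neg at h2
    obtain ⟨b, hba, hbn, hbo⟩ := h2
    obtain ⟨b₀, _, _, hb₀s, _⟩ := boston_least_succeeds pref hfree ⟨b, hbn, hbo⟩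
    exact ⟨b₀, boston_mono pref (by omega) hb₀s⟩
  · push_neg at hfree
    obtain ⟨c, hc⟩ := hfree
    exact ⟨c, boston_mono pref (by omega) hc⟩

lemma boston_complete
    (hpref : ∀ a : Fin n, ∀ k l : ℕ, k < n → l < n → pref a k = pref a l → k = l)
    (a : Fin n) : (bostonState pref n a).isSome := by
  classical
  by_contra h
  have ha : bostonState pref n a = none := by
    cases hh : bostonState pref n a with
    | none => rfl
    | some o => rw [hh] at h; simp at h
  have occ : ∀ j : Fin n, ∃ b : Fin n, bostonState pref n b = some (pref a j) :=
    fun j => boston_occupied pref ha j.isLt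
  choose g hg using occ
  set S : Finset (Fin n) := Finset.univ.filter (fun b => (bostonState pref n b).isSome) with hS
  have hginj : Set.InjOn g ↑(Finset.univ : Finset (Fin n)) := by
    intro j _ j' _ hjj
    have : some (pref a j) = some (pref a j') := by rw [← hg j, ← hg j', hjj]
    have hpp : pref a (j : ℕ) = pref a (j' : ℕ) := Option.some_injective _ this
    exact Fin.ext (hpref a j j' j.isLt j'.isLt hpp)
  have hmaps : ∀ j ∈ (Finset.univ : Finset (Fin n)), g j ∈ S := by
    intro j _; simp [hS, hg j]
  have hcard : n ≤ S.card := by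
    have := Finset.card_le_card_of_injOn g hmaps hginj
    simpa using this
  have : S = Finset.univ := Finset.eq_univ_of_card S
    (le_antisymm (by simpa using S.card_le_univ) (by simpa using hcard))
  have : a ∈ S := this ▸ Finset.mem_univ a
  rw [hS] at this
  simp [ha] at this

lemma find?_range_eq {p : ℕ → Bool} {k m : ℕ} (hk : k < m) (hpk : p k = true)
    (hlt : ∀ j < k, p j = false) : (List.range m).find? p = some k := by
  induction m with
  | zero => omega
  | succ m ih =>
      rw [List.range_succ, List.find?_append]
      rcases Nat.lt_or_ge k m with h | h
      · rw [ih h]; rfl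
      · have hkm : k = m := by omega
        have : (List.range m).find? p = none := by
          rw [List.find?_eq_none]
          intro x hx
          rw [List.mem_range] at hx
          rw [hlt x (hkm ▸ hx)]; simp
        rw [this]
        simp [List.find?, hkm ▸ hpk, hkm]

/-- agents unmatched under a partial assignment, in increasing order -/
def uList {n : ℕ} (st : Fin n → Option (Fin n)) : List (Fin n) :=
  (List.finRange n).filter fun a => decide (st a = none)

lemma mem_uList {st : Fin n → Option (Fin n)} {a : Fin n} :
    a ∈ uList st ↔ st a = none := by
  simp [uList, List.mem_filter, List.mem_finRange]

lemma uList_pairwise (st : Fin n → Option (Fin n)) :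
    (uList st).Pairwise (· < ·) :=
  (List.pairwise_lt_finRange n).filter _

/-- Mid-round invariant for PFQ simulating Boston round `k`: the agents in `P`
have already proposed this round, those in `Q` have not yet. -/
structure MidInv (pref : Fin n → ℕ → Fin n) (k : ℕ) (P Q : List (Fin n))
    (s : PFQState n) : Prop where
  hu : uList (bostonState pref k) = P ++ Q
  hq : s.queue = Q ++ P.filter (fun a => decide (bostonState pref (k+1) a = none))
  ha : ∀ a : Fin n, s.assign a = if a ∈ Q then none else bostonState pref (k+1) a
  hrQ : ∀ a ∈ Q, s.rejected a = (Finset.range k).image (pref a)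
  hrP : ∀ a ∈ P, bostonState pref (k+1) a = none →
          s.rejected a = (Finset.range (k+1)).image (pref a)

lemma midInv_step
    (hpref : ∀ a : Fin n, ∀ k l : ℕ, k < n → l < n → pref a k = pref a l → k = l)
    {k : ℕ} {P Q : List (Fin n)} {a : Fin n} {s : PFQState n}
    (hk : k < n) (h : MidInv pref k P (a :: Q) s) :
    MidInv pref k (P ++ [a]) Q (pfqStep pref s) := by
  classical
  obtain ⟨q, rej, asg⟩ := s
  obtain ⟨hu, hq, ha, hrQ, hrP⟩ := h
  simp only at hq ha hrQ hrP
  have hmem : ∀ b : Fin n, b ∈ P ++ a :: Q ↔ bostonState pref k b = none := by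
    intro b; rw [← hu, mem_uList]
  have haA : bostonState pref k a = none := (hmem a).mp (by simp)
  have hPW : (P ++ a :: Q).Pairwise (· < ·) := hu ▸ uList_pairwise _
  have hPa : ∀ b ∈ P, b < a := by
    intro b hb
    exact (List.pairwise_append.mp hPW).2.2 b hb a (by simp)
  have haQ : ∀ b ∈ Q, a < b := by
    have := (List.pairwise_append.mp hPW).2.1
    exact (List.pairwise_cons.mp this).1
  have haQn : a ∉ Q := fun hm => absurd (haQ a hm) (lt_irrefl a)
  have haPn : a ∉ P := fun hm => absurd (hPa a hm) (lt_irrefl a)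
  have hra : rej a = (Finset.range k).image (pref a) := hrQ a (by simp)
  rw [List.cons_append] at hq
  subst hq
  have hfind : (List.range n).find? (fun j => decide (pref a j ∉ rej a)) = some k := by
    apply find?_range_eq hk
    · rw [decide_eq_true_eq, hra]
      intro hmemi
      obtain ⟨j, hj, hpj⟩ := Finset.mem_image.mp hmemi
      rw [Finset.mem_range] at hj
      have := hpref a j k (by omega) hk hpj
      omega
    · intro j hj
      rw [decide_eq_false_iff_not, not_not, hra]
      exact Finset.mem_image.mpr ⟨j, Finset.mem_range.mpr hj, rfl⟩
  have hclaim2 : ((∀ b : Fin n, bostonState pref k b ≠ some (pref a k)) ∧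
      (∀ b : Fin n, b < a → bostonState pref k b = none → pref b k ≠ pref a k)) →
      ∀ b : Fin n, asg b ≠ some (pref a k) := by
    rintro ⟨hc1, hc2⟩ b hb
    rw [ha b] at hb
    by_cases hbQ : b ∈ a :: Q
    · rw [if_pos hbQ] at hb; exact absurd hb (by simp)
    · rw [if_neg hbQ] at hb
      rcases boston_succ_cases pref hb with hb' | ⟨hbn, hbo, _, _⟩
      · exact hc1 b hb'
      · have hbP : b ∈ P := by
          have hb2 : b ∈ P ++ a :: Q := (hmem b).mpr hbn
          rcases List.mem_append.mp hb2 with h' | h'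
          · exact h'
          · exact absurd h' hbQ
        exact hc2 b (hPa b hbP) hbn hbo
  have hclaim1 : (∀ b : Fin n, asg b ≠ some (pref a k)) →
      ((∀ b : Fin n, bostonState pref k b ≠ some (pref a k)) ∧
      (∀ b : Fin n, b < a → bostonState pref k b = none → pref b k ≠ pref a k)) := by
    intro hc
    have hc1 : ∀ b : Fin n, bostonState pref k b ≠ some (pref a k) := by
      intro b hb
      have hbB : bostonState pref (k+1) b = some (pref a k) := bostonStep_some pref hb
      have hbQ : b ∉ a :: Q := by
        intro hbQ
        have : bostonState pref k b = none :=
          (hmem b).mp (List.mem_append.mpr (Or.inr hbQ))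
        rw [this] at hb; exact absurd hb (by simp)
      apply hc b
      rw [ha b, if_neg hbQ]; exact hbB
    refine ⟨hc1, ?_⟩
    intro b hba hbn hbo
    obtain ⟨b₀, hb₀n, hb₀o, hb₀s, hb₀le⟩ := boston_least_succeeds pref hc1 ⟨b, hbn, hbo⟩
    have hb₀a : b₀ < a := lt_of_le_of_lt (hb₀le b hbn hbo) hba
    have hb₀Q : b₀ ∉ a :: Q := by
      intro hm
      rcases List.mem_cons.mp hm with h' | h'
      · exact absurd (h' ▸ hb₀a) (lt_irrefl a)
      · exact absurd (haQ b₀ h') (not_lt.mpr (le_of_lt hb₀a))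
    apply hc b₀
    rw [ha b₀, if_neg hb₀Q]
    exact hb₀s
  unfold pfqStep
  simp only [hfind]
  by_cases hc : ∀ b : Fin n, asg b ≠ some (pref a k)
  · rw [if_pos hc]
    have hBa : bostonState pref (k+1) a = some (pref a k) := by
      rw [boston_succ_none pref haA, if_pos (hclaim1 hc)]
    refine ⟨hu.trans (by simp), ?_, ?_, ?_, ?_⟩
    · simp [List.filter_append, hBa]
    · intro b
      by_cases hba : b = a
      · subst hba
        simp [Function.update_self, if_neg haQn, hBa]
      · show Function.update asg a (some (pref a k)) b = _
        rw [Function.update_of_ne hba, ha b]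
        simp [List.mem_cons, hba]
    · intro b hb; exact hrQ b (List.mem_cons_of_mem _ hb)
    · intro b hb hbB
      rcases List.mem_append.mp hb with h' | h'
      · exact hrP b h' hbB
      · rw [List.mem_singleton.mp h'] at hbB
        rw [hBa] at hbB; exact absurd hbB (by simp)
  · rw [if_neg hc]
    have hBa : bostonState pref (k+1) a = none := by
      rw [boston_succ_none pref haA, if_neg (fun hcond => hc (hclaim2 hcond))]
    refine ⟨hu.trans (by simp), ?_, ?_, ?_, ?_⟩
    · simp [List.filter_append, hBa, List.append_assoc]
    · intro b
      by_cases hba : b = a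
      · subst hba
        show asg b = _
        rw [ha b, if_pos (show b ∈ b :: Q from List.mem_cons_self), if_neg haQn, hBa]
      · show asg b = _
        rw [ha b]
        simp [List.mem_cons, hba]
    · intro b hb
      have hba : b ≠ a := fun h' => haQn (h' ▸ hb)
      show Function.update rej a (insert (pref a k) (rej a)) b = _
      rw [Function.update_of_ne hba]
      exact hrQ b (List.mem_cons_of_mem _ hb)
    · intro b hb hbB
      rcases List.mem_append.mp hb with h' | h'
      · have hba : b ≠ a := fun h'' => haPn (h'' ▸ h')
        show Function.update rej a (insert (pref a k) (rej a)) b = _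
        rw [Function.update_of_ne hba]
        exact hrP b h' hbB
      · rw [List.mem_singleton.mp h']
        show Function.update rej a (insert (pref a k) (rej a)) a = _
        rw [Function.update_self, hra, Finset.range_add_one, Finset.image_insert]

lemma midInv_round
    (hpref : ∀ a : Fin n, ∀ k l : ℕ, k < n → l < n → pref a k = pref a l → k = l)
    {k : ℕ} (hk : k < n) :
    ∀ (Q P : List (Fin n)) (s : PFQState n), MidInv pref k P Q s →
      MidInv pref k (P ++ Q) [] ((pfqStep pref)^[Q.length] s) := by
  intro Q
  induction Q with
  | nil => intro P s h; simpa using h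
  | cons a Q ih =>
      intro P s h
      have h1 := midInv_step pref hpref hk h
      have h2 := ih (P ++ [a]) (pfqStep pref s) h1
      rw [List.length_cons, Function.iterate_succ_apply]
      have he : (P ++ [a]) ++ Q = P ++ a :: Q := by simp
      rw [← he]
      exact h2

lemma midInv_roundEnd {k : ℕ} {U : List (Fin n)} {s : PFQState n}
    (h : MidInv pref k U [] s) :
    MidInv pref (k+1) [] (uList (bostonState pref (k+1))) s := by
  obtain ⟨hu, hq, ha, hrQ, hrP⟩ := h
  have hsub : ∀ a : Fin n, bostonState pref (k+1) a = none →
      bostonState pref k a = none := fun a => boston_none_of_none pref (Nat.le_succ k)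
  have hU : U = uList (bostonState pref k) := by rw [hu, List.append_nil]
  have hfil : U.filter (fun a => decide (bostonState pref (k+1) a = none)) =
      uList (bostonState pref (k+1)) := by
    rw [hU, uList, uList, List.filter_filter]
    apply List.filter_congr
    intro a _
    by_cases hB : bostonState pref (k+1) a = none
    · simp [hB, hsub a hB]
    · simp [hB]
  refine ⟨by simp, ?_, ?_, ?_, ?_⟩
  · rw [hq, List.nil_append, hfil]; simp
  · intro a
    rw [ha a]
    simp only [List.not_mem_nil, if_false]
    by_cases h' : a ∈ uList (bostonState pref (k+1))
    · rw [if_pos h']; exact mem_uList.mp h'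
    · rw [if_neg h']
      have hBa : bostonState pref (k+1) a ≠ none := fun hh => h' (mem_uList.mpr hh)
      cases hB : bostonState pref (k+1) a with
      | none => exact absurd hB hBa
      | some o =>
          exact (show bostonState pref (k+1+1) a = some o from bostonStep_some pref hB).symm
  · intro a haU
    have hB : bostonState pref (k+1) a = none := mem_uList.mp haU
    have haU' : a ∈ U := by
      rw [hU]; exact mem_uList.mpr (hsub a hB)
    exact hrP a haU' hB
  · intro a haU; exact absurd haU List.not_mem_nil

lemma midInv_iter
    (hpref : ∀ a : Fin n, ∀ k l : ℕ, k < n → l < n → pref a k = pref a l → k = l) :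
    ∀ k ≤ n, ∃ m ≤ k * n,
      MidInv pref k [] (uList (bostonState pref k))
        ((pfqStep pref)^[m]
          { queue := List.finRange n, rejected := fun _ => ∅, assign := fun _ => none }) := by
  intro k
  induction k with
  | zero =>
      intro _
      refine ⟨0, Nat.zero_le _, ?_, ?_, ?_, ?_, ?_⟩
      · simp
      · show List.finRange n = _
        simp only [List.filter_nil, List.append_nil]
        rw [uList]
        exact (List.filter_eq_self.mpr fun a _ => by simp [bostonState]).symm
      · intro a
        rw [if_pos (mem_uList.mpr (rfl : bostonState pref 0 a = none))]
        rfl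
      · intro a _; simp
      · intro a haU; exact absurd haU List.not_mem_nil
  | succ k ih =>
      intro hk1
      obtain ⟨m, hm, hinv⟩ := ih (by omega)
      have hk : k < n := by omega
      have hround := midInv_round pref hpref hk _ _ _ hinv
      rw [List.nil_append, ← Function.iterate_add_apply] at hround
      refine ⟨(uList (bostonState pref k)).length + m, ?_, midInv_roundEnd pref hround⟩
      have hlen : (uList (bostonState pref k)).length ≤ n := by
        have := List.length_filter_le (fun a => decide (bostonState pref k a = none))
          (List.finRange n)
        simpa [uList] using this
      calc (uList (bostonState pref k)).length + m ≤ n + k * n := by omega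
        _ = (k + 1) * n := by ring

lemma pfq_fixed {s : PFQState n} (h : s.queue = []) : pfqStep pref s = s := by
  obtain ⟨q, rej, asg⟩ := s
  simp only at h
  subst h
  rfl

end Aux

/-- PFQ (permanent memory, Accept-First, queue) with initial agent order
`0, 1, …, n-1` produces the same matching as the simultaneous Naive Boston
mechanism in which every item has the common priority order `0 > 1 > ⋯ > n-1`. -/
theorem pfq_eq_naive_boston {n : ℕ} (pref : Fin n → ℕ → Fin n)
    (hpref : ∀ a : Fin n, ∀ k l : ℕ, k < n → l < n → pref a k = pref a l → k = l)
    (hsurj : ∀ a : Fin n, ∀ o : Fin n, ∃ k < n, pref a k = o) :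
    ∀ a : Fin n, (pfqRun pref).assign a = bostonState pref n a := by
  classical
  intro a
  obtain ⟨m, hm, hinv⟩ := midInv_iter pref hpref n (le_refl n)
  have hUn : uList (bostonState pref n) = [] := by
    rw [uList, List.filter_eq_nil_iff]
    intro b _
    have hb := boston_complete pref hpref b
    simp only [decide_eq_true_eq]
    intro hcon
    rw [hcon] at hb
    simp at hb
  rw [hUn] at hinv
  have hqnil : ((pfqStep pref)^[m]
      { queue := List.finRange n, rejected := fun _ => ∅,
        assign := fun _ => (none : Option (Fin n)) } : PFQState n).queue = [] := by
    have := hinv.hq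
    simpa using this
  have hfix := pfq_fixed pref hqnil
  have hmle : m ≤ n * n + n := le_trans hm (by nlinarith)
  have hsplit : n * n + n = (n * n + n - m) + m := by omega
  rw [pfqRun, hsplit, Function.iterate_add_apply, Function.iterate_fixed hfix]
  have := hinv.ha a
  rw [this]
  simp only [List.not_mem_nil, if_false]
  obtain ⟨o, ho⟩ := Option.isSome_iff_exists.mp (boston_complete pref hpref a)
  rw [ho]
  exact (show bostonState pref (n+1) a = some o from bostonStep_some pref ho)
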